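/- Let m, n be positive integers and d = gcd(m, n). Suppose f, g, f_0, g_0 ∈ C(T) satisfy E_d(conj(f)·g) = α_m(f_0)·α_n(g_0). Then for every h ∈ C(T), E_m(conj(f)·g·E_n(h)) = α_m(f_0)·E_{lcm(m,n)}(α_n(g_0)·h). -/

import Mathlib

open scoped Real ComplexOrder

noncomputable def Lm (m : ℕ) (f : Circle → ℂ) (z : Circle) : ℂ :=
  (m : ℂ)⁻¹ * ∑ᶠ w ∈ {w : Circle | w ^ m = z}, f w

noncomputable def Em (m : ℕ) (f : Circle → ℂ) (z : Circle) : ℂ :=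
  (m : ℂ)⁻¹ * ∑ j ∈ Finset.range m, f (Circle.exp (2 * π * j / m) * z)

noncomputable def Zf (k : ℤ) : C(Circle, ℂ) :=
  ⟨fun z => ((z ^ k : Circle) : ℂ), continuous_induced_dom.comp (continuous_zpow k)⟩

noncomputable def alphaMap (m : ℕ) (f : C(Circle, ℂ)) : C(Circle, ℂ) :=
  f.comp ⟨fun z => z ^ m, by fun_prop⟩

noncomputable def rt (j N : ℕ) : Circle := Circle.exp (2 * π * j / N)

lemma rt_mul (j k N : ℕ) : rt j N * rt k N = rt (j + k) N := by
  unfold rt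
  rw [← Circle.exp_add]
  congr 1
  push_cast
  ring

lemma rt_period (j N : ℕ) (hN : 0 < N) : rt (j + N) N = rt j N := by
  unfold rt
  have hN' : (N : ℝ) ≠ 0 := Nat.cast_ne_zero.mpr hN.ne'
  have : (2 * π * (↑(j + N)) / N : ℝ) = 2 * π * j / N + 2 * π := by
    push_cast; field_simp
  rw [this, Circle.exp_add_two_pi]

lemma circle_exp_pow (x : ℝ) (n : ℕ) : Circle.exp x ^ n = Circle.exp (n * x) := by
  induction n with
  | zero => simp
  | succ n ih => rw [pow_succ, ih, ← Circle.exp_add]; congr 1; push_cast; ring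

lemma rt_pow (j N : ℕ) (hN : 0 < N) : rt j N ^ N = 1 := by
  unfold rt
  rw [circle_exp_pow]
  have hN' : (N : ℝ) ≠ 0 := Nat.cast_ne_zero.mpr hN.ne'
  have : ((N : ℝ) * (2 * π * j / N)) = 2 * π * (j : ℤ) := by field_simp; norm_cast
  rw [this, Circle.exp_two_pi_mul_int]

lemma rt_pow_mul {N : ℕ} (hN : 0 < N) (k : ℕ) (w : Circle) : (rt k N * w) ^ N = w ^ N := by
  rw [mul_pow, rt_pow k N hN, one_mul]

lemma rt_div (k c N : ℕ) (h : c ∣ N) (hN : 0 < N) : rt k c = rt (k * (N / c)) N := by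
  obtain ⟨u, rfl⟩ := h
  have hc : 0 < c := Nat.pos_of_ne_zero (by rintro rfl; simp at hN)
  have hu : 0 < u := Nat.pos_of_ne_zero (by rintro rfl; simp at hN)
  rw [Nat.mul_div_cancel_left _ hc]
  unfold rt
  congr 1
  have hc' : (c : ℝ) ≠ 0 := Nat.cast_ne_zero.mpr hc.ne'
  have hu' : (u : ℝ) ≠ 0 := Nat.cast_ne_zero.mpr hu.ne'
  push_cast
  field_simp

lemma sum_shift {N : ℕ} (ψ : ℕ → ℂ) (hψ : ∀ x, ψ (x + N) = ψ x) (c : ℕ) :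
    ∑ j ∈ Finset.range N, ψ (j + c) = ∑ j ∈ Finset.range N, ψ j := by
  induction c with
  | zero => simp
  | succ c ih =>
    rw [← ih]
    have h1 : ∑ j ∈ Finset.range N, ψ (j + (c + 1)) = ∑ j ∈ Finset.range N, ψ ((j + 1) + c) := by
      apply Finset.sum_congr rfl; intro j _; congr 1; ring
    rw [h1]
    have h2 := Finset.sum_range_succ' (fun j => ψ (j + c)) N
    have h3 := Finset.sum_range_succ (fun j => ψ (j + c)) N
    have h4 : ψ (N + c) = ψ (0 + c) := by
      rw [show N + c = c + N by ring, hψ c, zero_add]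
    rw [h4] at h3
    rw [h3] at h2
    linear_combination -h2

lemma psi_mod {N : ℕ} (hN : 0 < N) (ψ : ℕ → ℂ) (hψ : ∀ x, ψ (x + N) = ψ x) (n : ℕ) :
    ψ n = ψ (n % N) := by
  have key : ∀ q r, ψ (r + N * q) = ψ r := by
    intro q
    induction q with
    | zero => simp
    | succ q ih =>
      intro r
      have : r + N * (q + 1) = (r + N * q) + N := by ring
      rw [this, hψ, ih]
  conv_lhs => rw [← Nat.mod_add_div n N]
  rw [key]

lemma sum_range_zmod {N : ℕ} [NeZero N] (f : ℕ → ℂ) :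
    ∑ j ∈ Finset.range N, f j = ∑ x : ZMod N, f x.val := by
  apply Finset.sum_nbij' (i := fun (j : ℕ) => (j : ZMod N)) (j := fun (x : ZMod N) => x.val)
  · intro a _; exact Finset.mem_univ _
  · intro b _; exact Finset.mem_range.mpr (ZMod.val_lt b)
  · intro a ha; exact ZMod.val_cast_of_lt (Finset.mem_range.mp ha)
  · intro b _; exact ZMod.natCast_rightInverse b
  · intro a ha; rw [ZMod.val_cast_of_lt (Finset.mem_range.mp ha)]

lemma key_count {a b : ℕ} (ha : 0 < a) (hb : 0 < b) (hab : Nat.Coprime a b)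
    (Ψ : ℕ → ℂ) (hΨ : ∀ x, Ψ (x + a * b) = Ψ x) :
    ∑ j ∈ Finset.range a, ∑ k ∈ Finset.range b, Ψ (j * b + k * a)
      = ∑ t ∈ Finset.range (a * b), Ψ t := by
  haveI : NeZero a := ⟨ha.ne'⟩
  haveI : NeZero b := ⟨hb.ne'⟩
  haveI : NeZero (a * b) := ⟨(Nat.mul_pos ha hb).ne'⟩
  set Ψ' : ZMod (a * b) → ℂ := fun x => Ψ x.val with hΨ'
  have cast_eq : ∀ n : ℕ, Ψ n = Ψ' (n : ZMod (a * b)) := by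
    intro n
    show Ψ n = Ψ ((n : ZMod (a * b)).val)
    rw [ZMod.val_natCast]
    exact psi_mod (Nat.mul_pos ha hb) Ψ hΨ n
  have hR : ∑ t ∈ Finset.range (a * b), Ψ t = ∑ x : ZMod (a * b), Ψ' x :=
    sum_range_zmod (f := Ψ)
  have hL : ∑ j ∈ Finset.range a, ∑ k ∈ Finset.range b, Ψ (j * b + k * a)
      = ∑ p : ZMod a × ZMod b, Ψ' ((p.1.val * b + p.2.val * a : ℕ)) := by
    rw [sum_range_zmod (f := fun j => ∑ k ∈ Finset.range b, Ψ (j * b + k * a))]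
    rw [Fintype.sum_prod_type]
    apply Finset.sum_congr rfl
    intro x _
    rw [sum_range_zmod (f := fun k => Ψ (x.val * b + k * a))]
    exact Finset.sum_congr rfl fun y _ => cast_eq _
  rw [hL, hR]
  set φ : ZMod a × ZMod b → ZMod (a * b) :=
    fun p => ((p.1.val * b + p.2.val * a : ℕ) : ZMod (a * b)) with hφ
  have hbij : Function.Bijective φ := by
    rw [Fintype.bijective_iff_injective_and_card]
    constructor
    · intro p q hpq
      have h1 := congrArg (ZMod.castHom (dvd_mul_right a b) (ZMod a)) hpq
      have h2 := congrArg (ZMod.castHom (dvd_mul_left b a) (ZMod b)) hpq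
      simp only [hφ, map_natCast] at h1 h2
      push_cast at h1 h2
      simp only [ZMod.natCast_val, ZMod.cast_id, ZMod.natCast_self, mul_zero, zero_mul,
        add_zero, zero_add, mul_comm] at h1 h2
      have hu1 : IsUnit ((b : ℕ) : ZMod a) :=
        (ZMod.unitOfCoprime b hab.symm).isUnit
      have hu2 : IsUnit ((a : ℕ) : ZMod b) :=
        (ZMod.unitOfCoprime a hab).isUnit
      have e1 : p.1 = q.1 := by
        apply hu1.mul_left_cancel
        rw [mul_comm ((b : ℕ) : ZMod a) p.1, mul_comm ((b : ℕ) : ZMod a) q.1]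
        exact h1
      have e2 : p.2 = q.2 := by
        apply hu2.mul_left_cancel
        rw [mul_comm ((a : ℕ) : ZMod b) p.2, mul_comm ((a : ℕ) : ZMod b) q.2]
        exact h2
      exact Prod.ext e1 e2
    · simp [ZMod.card]
  exact Fintype.sum_bijective φ hbij _ _ fun p => rfl

noncomputable def SS (N : ℕ) (Φ : Circle → ℂ) (w : Circle) : ℂ :=
  ∑ j ∈ Finset.range N, Φ (rt j N * w)

lemma Em_eq (N : ℕ) (Φ : Circle → ℂ) (z : Circle) : Em N Φ z = (N : ℂ)⁻¹ * SS N Φ z := rfl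

lemma SS_root_mul {N c : ℕ} (h : c ∣ N) (hN : 0 < N) (Φ : Circle → ℂ) (k : ℕ) (w : Circle) :
    SS N Φ (rt k c * w) = SS N Φ w := by
  unfold SS
  have hstep : ∀ j, rt j N * (rt k c * w) = rt (j + k * (N / c)) N * w := by
    intro j
    rw [rt_div k c N h hN, ← mul_assoc, rt_mul]
  have hper : ∀ x : ℕ, (fun x => Φ (rt x N * w)) (x + N) = (fun x => Φ (rt x N * w)) x := by
    intro x
    show Φ (rt (x + N) N * w) = Φ (rt x N * w)
    rw [rt_period x N hN]
  calc ∑ j ∈ Finset.range N, Φ (rt j N * (rt k c * w))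
      = ∑ j ∈ Finset.range N, Φ (rt (j + k * (N / c)) N * w) :=
        Finset.sum_congr rfl fun j _ => by rw [hstep]
    _ = ∑ j ∈ Finset.range N, Φ (rt j N * w) :=
        sum_shift (fun x => Φ (rt x N * w)) hper (k * (N / c))

lemma Em_root_mul {N c : ℕ} (h : c ∣ N) (hN : 0 < N) (Φ : Circle → ℂ) (k : ℕ) (w : Circle) :
    Em N Φ (rt k c * w) = Em N Φ w := by
  rw [Em_eq, Em_eq, SS_root_mul h hN]

lemma SS_coprime {a b : ℕ} (ha : 0 < a) (hb : 0 < b) (hab : Nat.Coprime a b)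
    (Φ : Circle → ℂ) (w : Circle) :
    ∑ i ∈ Finset.range a, ∑ l ∈ Finset.range b, Φ (rt i a * (rt l b * w))
      = SS (a * b) Φ w := by
  have hab0 : 0 < a * b := Nat.mul_pos ha hb
  have e1 : a * b / a = b := Nat.mul_div_cancel_left b ha
  have e2 : a * b / b = a := Nat.mul_div_cancel a hb
  have harg : ∀ i l, rt i a * (rt l b * w) = rt (i * b + l * a) (a * b) * w := by
    intro i l
    rw [rt_div i a (a * b) (dvd_mul_right a b) hab0, e1,
      rt_div l b (a * b) (dvd_mul_left b a) hab0, e2, ← mul_assoc, rt_mul]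
  calc ∑ i ∈ Finset.range a, ∑ l ∈ Finset.range b, Φ (rt i a * (rt l b * w))
      = ∑ i ∈ Finset.range a, ∑ l ∈ Finset.range b, Φ (rt (i * b + l * a) (a * b) * w) :=
        Finset.sum_congr rfl fun i _ => Finset.sum_congr rfl fun l _ => by rw [harg]
    _ = ∑ t ∈ Finset.range (a * b), Φ (rt t (a * b) * w) := by
        refine key_count ha hb hab (fun t => Φ (rt t (a * b) * w)) (fun x => ?_)
        show Φ (rt (x + a * b) (a * b) * w) = Φ (rt x (a * b) * w)
        rw [rt_period x (a * b) hab0]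
    _ = SS (a * b) Φ w := rfl

lemma sum_swap4 {A B C D : Finset ℕ} (F : ℕ → ℕ → ℕ → ℕ → ℂ) :
    ∑ i ∈ A, ∑ l ∈ B, ∑ k ∈ C, ∑ j ∈ D, F i l k j
      = ∑ k ∈ C, ∑ j ∈ D, ∑ i ∈ A, ∑ l ∈ B, F i l k j := by
  calc ∑ i ∈ A, ∑ l ∈ B, ∑ k ∈ C, ∑ j ∈ D, F i l k j
      = ∑ i ∈ A, ∑ k ∈ C, ∑ l ∈ B, ∑ j ∈ D, F i l k j :=
        Finset.sum_congr rfl fun i _ => Finset.sum_comm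
    _ = ∑ k ∈ C, ∑ i ∈ A, ∑ l ∈ B, ∑ j ∈ D, F i l k j := Finset.sum_comm
    _ = ∑ k ∈ C, ∑ i ∈ A, ∑ j ∈ D, ∑ l ∈ B, F i l k j :=
        Finset.sum_congr rfl fun k _ => Finset.sum_congr rfl fun i _ => Finset.sum_comm
    _ = ∑ k ∈ C, ∑ j ∈ D, ∑ i ∈ A, ∑ l ∈ B, F i l k j :=
        Finset.sum_congr rfl fun k _ => Finset.sum_comm

lemma hcomm4 (p q r s t : Circle) : p * (q * (r * (s * t))) = q * (s * (p * (r * t))) := by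
  simp only [← mul_assoc]
  ac_rfl

lemma Em_Em {m n : ℕ} (hm : 0 < m) (hn : 0 < n) (Ψ : Circle → ℂ) (z : Circle) :
    Em m (fun w => Em n Ψ w) z = Em (Nat.lcm m n) Ψ z := by
  set L := Nat.lcm m n with hLdef
  set a := Nat.factorizationLCMLeft m n with ha'
  set b := Nat.factorizationLCMRight m n with hb'
  have hadvd : a ∣ m := Nat.factorizationLCMLeft_dvd_left m n
  have hbdvd : b ∣ n := Nat.factorizationLCMRight_dvd_right m n
  have hab : Nat.Coprime a b := Nat.coprime_factorizationLCMLeft_factorizationLCMRight m n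
  have hmul : a * b = L := by
    have := Nat.factorizationLCMLeft_mul_factorizationLCMRight (a := m) (b := n) hm.ne' hn.ne'
    simpa [hLdef] using this
  have ha : 0 < a := Nat.pos_of_dvd_of_pos hadvd hm
  have hb : 0 < b := Nat.pos_of_dvd_of_pos hbdvd hn
  have hL : 0 < L := Nat.pos_of_ne_zero (Nat.lcm_ne_zero hm.ne' hn.ne')
  have hmL : m ∣ L := Nat.dvd_lcm_left m n
  have hnL : n ∣ L := Nat.dvd_lcm_right m n
  set U := SS L Ψ z with hU
  set T := ∑ k ∈ Finset.range n, SS m Ψ (rt k n * z) with hT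
  have key : ((a * b : ℕ) : ℂ) * T = ((n * m : ℕ) : ℂ) * U := by
    have ins : ∀ i l : ℕ, T = ∑ k ∈ Finset.range n, ∑ j ∈ Finset.range m,
        Ψ (rt i a * (rt l b * (rt j m * (rt k n * z)))) := by
      intro i l
      calc T = SS n (fun u => SS m Ψ u) z := rfl
        _ = SS n (fun u => SS m Ψ u) (rt l b * z) := (SS_root_mul hbdvd hn _ l z).symm
        _ = ∑ k ∈ Finset.range n, SS m Ψ (rt k n * (rt l b * z)) := rfl
        _ = ∑ k ∈ Finset.range n, SS m Ψ (rt i a * (rt k n * (rt l b * z))) :=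
            Finset.sum_congr rfl fun k _ => (SS_root_mul hadvd hm Ψ i _).symm
        _ = ∑ k ∈ Finset.range n, ∑ j ∈ Finset.range m,
              Ψ (rt j m * (rt i a * (rt k n * (rt l b * z)))) := rfl
        _ = ∑ k ∈ Finset.range n, ∑ j ∈ Finset.range m,
              Ψ (rt i a * (rt l b * (rt j m * (rt k n * z)))) :=
            Finset.sum_congr rfl fun k _ => Finset.sum_congr rfl fun j _ => by
              rw [hcomm4]
    calc ((a * b : ℕ) : ℂ) * T
        = ∑ i ∈ Finset.range a, ∑ l ∈ Finset.range b, T := by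
          simp only [Finset.sum_const, Finset.card_range, smul_smul, nsmul_eq_mul]
          push_cast
          ring
      _ = ∑ i ∈ Finset.range a, ∑ l ∈ Finset.range b, ∑ k ∈ Finset.range n,
            ∑ j ∈ Finset.range m, Ψ (rt i a * (rt l b * (rt j m * (rt k n * z)))) :=
          Finset.sum_congr rfl fun i _ => Finset.sum_congr rfl fun l _ => ins i l
      _ = ∑ k ∈ Finset.range n, ∑ j ∈ Finset.range m, ∑ i ∈ Finset.range a,
            ∑ l ∈ Finset.range b, Ψ (rt i a * (rt l b * (rt j m * (rt k n * z)))) :=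
          sum_swap4 _
      _ = ∑ k ∈ Finset.range n, ∑ j ∈ Finset.range m, SS (a * b) Ψ (rt j m * (rt k n * z)) :=
          Finset.sum_congr rfl fun k _ => Finset.sum_congr rfl fun j _ =>
            SS_coprime ha hb hab Ψ _
      _ = ∑ k ∈ Finset.range n, ∑ j ∈ Finset.range m, U := by
          apply Finset.sum_congr rfl; intro k _; apply Finset.sum_congr rfl; intro j _
          rw [hmul, SS_root_mul hmL hL, SS_root_mul hnL hL]
      _ = ((n * m : ℕ) : ℂ) * U := by
          simp only [Finset.sum_const, Finset.card_range, smul_smul, nsmul_eq_mul]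
          push_cast
          ring
  have expand : Em m (fun w => Em n Ψ w) z = (m : ℂ)⁻¹ * ((n : ℂ)⁻¹ * T) := by
    rw [Em_eq]
    congr 1
    show (∑ j ∈ Finset.range m, Em n Ψ (rt j m * z)) = (n : ℂ)⁻¹ * T
    calc ∑ j ∈ Finset.range m, Em n Ψ (rt j m * z)
        = ∑ j ∈ Finset.range m, (n : ℂ)⁻¹ * SS n Ψ (rt j m * z) := rfl
      _ = (n : ℂ)⁻¹ * ∑ j ∈ Finset.range m, SS n Ψ (rt j m * z) := (Finset.mul_sum _ _ _).symm
      _ = (n : ℂ)⁻¹ * T := by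
          congr 1
          calc ∑ j ∈ Finset.range m, SS n Ψ (rt j m * z)
              = ∑ j ∈ Finset.range m, ∑ k ∈ Finset.range n, Ψ (rt k n * (rt j m * z)) := rfl
            _ = ∑ j ∈ Finset.range m, ∑ k ∈ Finset.range n, Ψ (rt j m * (rt k n * z)) :=
                Finset.sum_congr rfl fun j _ => Finset.sum_congr rfl fun k _ => by
                  rw [mul_left_comm]
            _ = ∑ k ∈ Finset.range n, ∑ j ∈ Finset.range m, Ψ (rt j m * (rt k n * z)) :=
                Finset.sum_comm
            _ = T := rfl
  rw [expand, Em_eq, ← hU]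
  have hm' : (m : ℂ) ≠ 0 := Nat.cast_ne_zero.mpr hm.ne'
  have hn' : (n : ℂ) ≠ 0 := Nat.cast_ne_zero.mpr hn.ne'
  have hL' : (L : ℂ) ≠ 0 := Nat.cast_ne_zero.mpr hL.ne'
  rw [hmul] at key
  push_cast at key
  field_simp
  linear_combination key

lemma factor_f0 {m : ℕ} (hm : 0 < m) (f₀ : Circle → ℂ) (X : Circle → ℂ) (z : Circle) :
    Em m (fun w => f₀ (w ^ m) * X w) z = f₀ (z ^ m) * Em m X z := by
  rw [Em_eq, Em_eq, mul_left_comm]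
  congr 1
  show SS m (fun w => f₀ (w ^ m) * X w) z = f₀ (z ^ m) * SS m X z
  unfold SS
  rw [Finset.mul_sum]
  refine Finset.sum_congr rfl fun j _ => ?_
  show f₀ ((rt j m * z) ^ m) * X (rt j m * z) = f₀ (z ^ m) * X (rt j m * z)
  rw [rt_pow_mul hm]

lemma step3 {n : ℕ} (hn : 0 < n) (g₀ : Circle → ℂ) (h : Circle → ℂ) (w : Circle) :
    g₀ (w ^ n) * Em n h w = Em n (fun u => g₀ (u ^ n) * h u) w := by
  rw [Em_eq, Em_eq, mul_left_comm]
  congr 1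
  show g₀ (w ^ n) * SS n h w = SS n (fun u => g₀ (u ^ n) * h u) w
  unfold SS
  rw [Finset.mul_sum]
  refine Finset.sum_congr rfl fun k _ => ?_
  show g₀ (w ^ n) * h (rt k n * w) = g₀ ((rt k n * w) ^ n) * h (rt k n * w)
  rw [rt_pow_mul hn]

set_option maxHeartbeats 2000000 in
lemma insert_Ed {m n d : ℕ} (hm : 0 < m) (hn : 0 < n) (hd : 0 < d)
    (hdm : d ∣ m) (hdn : d ∣ n) (F h : Circle → ℂ) (z : Circle) :
    Em m (fun w => F w * Em n h w) z = Em m (fun w => Em d F w * Em n h w) z := by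
  rw [Em_eq, Em_eq]
  congr 1
  have hd' : (d : ℂ) ≠ 0 := Nat.cast_ne_zero.mpr hd.ne'
  show SS m (fun w => F w * Em n h w) z = SS m (fun w => Em d F w * Em n h w) z
  have rhs : SS m (fun w => Em d F w * Em n h w) z
      = (d : ℂ)⁻¹ * ∑ b ∈ Finset.range d, SS m (fun u => F u * Em n h u) z := by
    calc SS m (fun w => Em d F w * Em n h w) z
        = ∑ j ∈ Finset.range m,
            ((d : ℂ)⁻¹ * ∑ b ∈ Finset.range d, F (rt b d * (rt j m * z)))
              * Em n h (rt j m * z) := rfl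
      _ = (d : ℂ)⁻¹ * ∑ j ∈ Finset.range m, ∑ b ∈ Finset.range d,
            F (rt b d * (rt j m * z)) * Em n h (rt j m * z) := by
          rw [Finset.mul_sum]
          apply Finset.sum_congr rfl
          intro j _
          rw [mul_assoc, Finset.sum_mul]
      _ = (d : ℂ)⁻¹ * ∑ j ∈ Finset.range m, ∑ b ∈ Finset.range d,
            F (rt b d * (rt j m * z)) * Em n h (rt b d * (rt j m * z)) := by
          congr 1
          apply Finset.sum_congr rfl; intro j _
          apply Finset.sum_congr rfl; intro b _
          rw [Em_root_mul hdn hn]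
      _ = (d : ℂ)⁻¹ * ∑ b ∈ Finset.range d, ∑ j ∈ Finset.range m,
            (fun u => F u * Em n h u) (rt j m * (rt b d * z)) := by
          rw [Finset.sum_comm]
          congr 1
          apply Finset.sum_congr rfl; intro b _
          apply Finset.sum_congr rfl; intro j _
          show F (rt b d * (rt j m * z)) * Em n h (rt b d * (rt j m * z))
              = F (rt j m * (rt b d * z)) * Em n h (rt j m * (rt b d * z))
          rw [mul_left_comm]
      _ = (d : ℂ)⁻¹ * ∑ b ∈ Finset.range d, SS m (fun u => F u * Em n h u) (rt b d * z) := rfl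
      _ = (d : ℂ)⁻¹ * ∑ b ∈ Finset.range d, SS m (fun u => F u * Em n h u) z := by
          congr 1
          exact Finset.sum_congr rfl fun b _ => SS_root_mul hdm hm _ b z
  rw [rhs, Finset.sum_const, Finset.card_range, nsmul_eq_mul]
  field_simp

/-- if `E_d(f* g) = α_m(f₀) α_n(g₀)` with `d = gcd(m,n)`, then
`E_m(f* g E_n(h)) = α_m(f₀) E_{lcm(m,n)}(α_n(g₀) h)` for all `h`. -/
theorem stmt6 (m n : ℕ) (hm : 0 < m) (hn : 0 < n) (f g f₀ g₀ : C(Circle, ℂ))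
    (hfg : ∀ z, Em (Nat.gcd m n) (fun w => star (f w) * g w) z
      = alphaMap m f₀ z * alphaMap n g₀ z)
    (h : C(Circle, ℂ)) (z : Circle) :
    Em m (fun w => star (f w) * g w * Em n (h : Circle → ℂ) w) z
      = alphaMap m f₀ z * Em (Nat.lcm m n) (fun w => alphaMap n g₀ w * h w) z := by
  have hd : 0 < Nat.gcd m n := Nat.gcd_pos_of_pos_left n hm
  have hdm : Nat.gcd m n ∣ m := Nat.gcd_dvd_left m n
  have hdn : Nat.gcd m n ∣ n := Nat.gcd_dvd_right m n
  have halpha : ∀ w, alphaMap m f₀ w * alphaMap n g₀ w = f₀ (w ^ m) * g₀ (w ^ n) :=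
    fun w => rfl
  calc Em m (fun w => star (f w) * g w * Em n (h : Circle → ℂ) w) z
      = Em m (fun w => Em (Nat.gcd m n) (fun u => star (f u) * g u) w
          * Em n (h : Circle → ℂ) w) z :=
        insert_Ed hm hn hd hdm hdn _ _ z
    _ = Em m (fun w => f₀ (w ^ m) * (g₀ (w ^ n) * Em n (h : Circle → ℂ) w)) z := by
        congr 1
        funext w
        rw [hfg w, halpha w, mul_assoc]
    _ = f₀ (z ^ m) * Em m (fun w => g₀ (w ^ n) * Em n (h : Circle → ℂ) w) z :=
        factor_f0 hm _ _ z
    _ = f₀ (z ^ m) * Em m (fun w => Em n (fun u => g₀ (u ^ n) * h u) w) z := by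
        congr 1
        congr 1
        funext w
        exact step3 hn _ _ w
    _ = f₀ (z ^ m) * Em (Nat.lcm m n) (fun u => g₀ (u ^ n) * h u) z := by
        rw [Em_Em hm hn]
    _ = alphaMap m f₀ z * Em (Nat.lcm m n) (fun w => alphaMap n g₀ w * h w) z := rfl
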